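/- arXiv:2406.17952 — 2 statements merged into one kernel-verified Lean document; each statement's English description precedes it below -/
import Mathlib

section
/- For symmetric positive definite Σ_K, Σ_Q and vectors μ_P, μ_Q ∈ ℝ^d: ‖μ_P−μ_Q‖_{Σ_K^{-1}} − ‖μ_P−μ_Q‖_{Σ_Q^{-1}} ≤ ‖Σ_K^{-1/2}Σ_Q^{1/2} − I‖₂ · ‖μ_P−μ_Q‖_{Σ_Q^{-1}}, where ‖·‖₂ is the spectral norm. -/
open Matrix MeasureTheory

/-- Elliptic norm `‖x‖_A = √(xᵀ A x)`. -/
noncomputable def enorm' {d : ℕ} (A : Matrix (Fin d) (Fin d) ℝ) (x : Fin d → ℝ) : ℝ :=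
  Real.sqrt (x ⬝ᵥ A.mulVec x)

section
open scoped ComplexOrder

/-- The square root of a positive semidefinite matrix (as in Mathlib of December 2024). -/
noncomputable def Matrix.PosSemidef.sqrt {n 𝕜 : Type*} [Fintype n] [RCLike 𝕜] [DecidableEq n]
    {A : Matrix n n 𝕜} (hA : A.PosSemidef) : Matrix n n 𝕜 :=
  hA.1.eigenvectorUnitary.1 * diagonal ((↑) ∘ (√·) ∘ hA.1.eigenvalues) *
  (star hA.1.eigenvectorUnitary : Matrix n n 𝕜)

end

/-- Spectral (operator) norm of a matrix. -/
noncomputable def specNorm {d : ℕ} (A : Matrix (Fin d) (Fin d) ℝ) : ℝ :=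
  ‖Matrix.toEuclideanCLM (𝕜 := ℝ) A‖

open scoped ComplexOrder in
theorem Matrix.PosSemidef.sqrt_mul_self {n 𝕜 : Type*} [Fintype n] [RCLike 𝕜] [DecidableEq n]
    {A : Matrix n n 𝕜} (hA : A.PosSemidef) : hA.sqrt * hA.sqrt = A := by
  conv_rhs => rw [hA.1.spectral_theorem, Unitary.conjStarAlgAut_apply]
  have hU := Unitary.coe_star_mul_self hA.1.eigenvectorUnitary
  simp only [Matrix.PosSemidef.sqrt]
  set U : Matrix n n 𝕜 := hA.1.eigenvectorUnitary.1
  set D := diagonal ((↑) ∘ (√·) ∘ hA.1.eigenvalues : n → 𝕜)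
  calc U * D * star U * (U * D * star U) = U * D * (star U * U) * D * star U := by
        simp only [Matrix.mul_assoc]
    _ = U * (D * D) * star U := by rw [hU, Matrix.mul_one]; simp only [Matrix.mul_assoc]
    _ = _ := by
        congr 2
        rw [diagonal_mul_diagonal]
        congr 1
        funext i
        simp only [Function.comp_apply, ← RCLike.ofReal_mul]
        rw [Real.mul_self_sqrt (hA.eigenvalues_nonneg i)]

open scoped ComplexOrder in
theorem Matrix.PosSemidef.sqrt_isHermitian {n 𝕜 : Type*} [Fintype n] [RCLike 𝕜] [DecidableEq n]
    {A : Matrix n n 𝕜} (hA : A.PosSemidef) : hA.sqrt.IsHermitian := by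
  have hs : star (RCLike.ofReal ∘ (fun x => √x) ∘ hA.1.eigenvalues : n → 𝕜) =
      RCLike.ofReal ∘ (fun x => √x) ∘ hA.1.eigenvalues := by
    funext i; simp
  rw [IsHermitian, PosSemidef.sqrt, conjTranspose_mul, conjTranspose_mul, diagonal_conjTranspose,
    Matrix.star_eq_conjTranspose, conjTranspose_conjTranspose, Matrix.mul_assoc]
  erw [hs]

-- sqrt of a posdef matrix is a unit
lemma sqrt_isUnit {d : ℕ} {A : Matrix (Fin d) (Fin d) ℝ} (hA : A.PosDef) :
    IsUnit hA.posSemidef.sqrt := by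
  have h := hA.posSemidef.sqrt_mul_self
  have : IsUnit (A.det) := isUnit_iff_ne_zero.2 hA.det_pos.ne'
  rw [← h, det_mul] at this
  exact (isUnit_iff_isUnit_det _).2 (isUnit_of_mul_isUnit_left this)

lemma sqrt_transpose {d : ℕ} {A : Matrix (Fin d) (Fin d) ℝ} (hA : A.PosSemidef) :
    hA.sqrtᵀ = hA.sqrt := hA.sqrt_isHermitian

lemma enorm_inv_eq {d : ℕ} {A : Matrix (Fin d) (Fin d) ℝ} (hA : A.PosDef) (x : Fin d → ℝ) :
    enorm' A⁻¹ x = Real.sqrt ((hA.posSemidef.sqrt⁻¹ *ᵥ x) ⬝ᵥ (hA.posSemidef.sqrt⁻¹ *ᵥ x)) := by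
  have h1 : A⁻¹ = hA.posSemidef.sqrt⁻¹ * hA.posSemidef.sqrt⁻¹ := by
    rw [← Matrix.mul_inv_rev, hA.posSemidef.sqrt_mul_self]
  have hsym : (hA.posSemidef.sqrt⁻¹)ᵀ = hA.posSemidef.sqrt⁻¹ := by
    rw [Matrix.transpose_nonsing_inv, sqrt_transpose]
  rw [enorm', h1, ← mulVec_mulVec, dotProduct_mulVec]
  congr 1
  congr 1
  conv_lhs => rw [← hsym]
  rw [Matrix.vecMul_transpose]

theorem stmt10 {d : ℕ} (μP μQ : Fin d → ℝ) (SK SQ : Matrix (Fin d) (Fin d) ℝ)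
    (hK : SK.PosDef) (hQ : SQ.PosDef) :
    enorm' SK⁻¹ (μP - μQ) - enorm' SQ⁻¹ (μP - μQ) ≤
      specNorm ((hK.posSemidef.sqrt)⁻¹ * hQ.posSemidef.sqrt - 1) * enorm' SQ⁻¹ (μP - μQ) := by
  set x := μP - μQ
  set S := hQ.posSemidef.sqrt
  set T := hK.posSemidef.sqrt
  set y := S⁻¹ *ᵥ x with hy
  have hSy : S *ᵥ y = x := by
    rw [hy, mulVec_mulVec, Matrix.mul_nonsing_inv _ ((isUnit_iff_isUnit_det _).1 (sqrt_isUnit hQ)),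
      one_mulVec]
  -- Euclidean vector
  set Y : EuclideanSpace ℝ (Fin d) := (WithLp.equiv 2 _).symm y with hY
  have hnorm : ∀ v : Fin d → ℝ, ‖(WithLp.equiv 2 (Fin d → ℝ)).symm v‖ = Real.sqrt (v ⬝ᵥ v) := by
    intro v
    rw [EuclideanSpace.norm_eq]
    congr 1
    simp [dotProduct, sq, Real.norm_eq_abs, abs_mul_abs_self]
  have hQnorm : enorm' SQ⁻¹ x = ‖Y‖ := by rw [enorm_inv_eq hQ, hY, hnorm]
  have hKnorm : enorm' SK⁻¹ x =
      ‖Matrix.toEuclideanCLM (𝕜 := ℝ) (T⁻¹ * S) Y‖ := by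
    rw [enorm_inv_eq hK, hY, WithLp.equiv_symm_apply, toEuclideanCLM_toLp, ← WithLp.equiv_symm_apply, hnorm, ← mulVec_mulVec, hSy]
  rw [hQnorm, hKnorm]
  set M : EuclideanSpace ℝ (Fin d) →L[ℝ] EuclideanSpace ℝ (Fin d) :=
    Matrix.toEuclideanCLM (𝕜 := ℝ) (T⁻¹ * S - 1) with hM
  have hspec : specNorm (T⁻¹ * S - 1) = ‖M‖ := rfl
  rw [hspec]
  have h2 : Matrix.toEuclideanCLM (𝕜 := ℝ) (T⁻¹ * S - 1) Y =
      Matrix.toEuclideanCLM (𝕜 := ℝ) (T⁻¹ * S) Y - Y := by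
    rw [map_sub, _root_.map_one, ContinuousLinearMap.sub_apply, ContinuousLinearMap.one_apply]
  calc ‖Matrix.toEuclideanCLM (𝕜 := ℝ) (T⁻¹ * S) Y‖ - ‖Y‖
      ≤ ‖Matrix.toEuclideanCLM (𝕜 := ℝ) (T⁻¹ * S) Y - Y‖ := norm_sub_norm_le _ _
    _ = ‖M Y‖ := by rw [hM, h2]
    _ ≤ ‖M‖ * ‖Y‖ := M.le_opNorm Y
end

section
/- Let D₁(P,Q) = ‖Σ_Q^{-1/2}Σ_PΣ_Q^{-1/2} − I‖_F + ‖Σ_P^{-1/2}Σ_QΣ_P^{-1/2} − I‖_F for symmetric positive definite Σ_P, Σ_Q. If all Frobenius-norm terms entering D(P,Q) and D(Q,K) are at most ε and Σ_P, Σ_Q, Σ_K pairwise commute, then D₁(P,K) ≤ D₁(P,Q) + D₁(Q,K) + 2ε². -/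
open Matrix MeasureTheory

attribute [local instance] Matrix.frobeniusSeminormedAddCommGroup

/-- Frobenius norm `‖A‖_F = √(tr (Aᵀ A))`. -/
noncomputable def frob {d : ℕ} (A : Matrix (Fin d) (Fin d) ℝ) : ℝ :=
  Real.sqrt (Matrix.trace (Aᵀ * A))

/-- `D₁(P,Q)`, the covariance part of the LINSCAN distance. -/
noncomputable def D1 {d : ℕ} {SP SQ : Matrix (Fin d) (Fin d) ℝ}
    (hP : SP.PosDef) (hQ : SQ.PosDef) : ℝ :=
  frob ((hQ.posSemidef.sqrt)⁻¹ * SP * (hQ.posSemidef.sqrt)⁻¹ - 1)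
    + frob ((hP.posSemidef.sqrt)⁻¹ * SQ * (hP.posSemidef.sqrt)⁻¹ - 1)

lemma frob_eq_norm {d : ℕ} (A : Matrix (Fin d) (Fin d) ℝ) : frob A = ‖A‖ := by
  rw [frob, Matrix.frobenius_norm_def, Real.sqrt_eq_rpow]
  congr 1
  calc Matrix.trace (Aᵀ * A) = ∑ i, ∑ j, A j i * A j i := by
        simp [Matrix.trace, Matrix.mul_apply]
  _ = ∑ j, ∑ i, A j i * A j i := Finset.sum_comm
  _ = ∑ i, ∑ j, ‖A i j‖ ^ (2 : ℝ) := by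
        refine Finset.sum_congr rfl fun i _ => Finset.sum_congr rfl fun j _ => ?_
        rw [Real.rpow_two, Real.norm_eq_abs, sq, abs_mul_abs_self]

section aux

variable {n : Type*} [Fintype n] [DecidableEq n]

lemma commute_sqrt {B : Matrix n n ℝ} (hB : B.PosSemidef)
    {A : Matrix n n ℝ} (h : A * B = B * A) : A * hB.sqrt = hB.sqrt * A := by
  set U : Matrix n n ℝ := hB.1.eigenvectorUnitary.1 with hUdef
  have hU1 : U * star U = 1 := Matrix.mem_unitaryGroup_iff.mp hB.1.eigenvectorUnitary.2
  have hU2 : star U * U = 1 := Matrix.mem_unitaryGroup_iff'.mp hB.1.eigenvectorUnitary.2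
  set g : n → ℝ := RCLike.ofReal ∘ hB.1.eigenvalues with hgdef
  set f : n → ℝ := ((↑) : ℝ → ℝ) ∘ Real.sqrt ∘ hB.1.eigenvalues with hfdef
  have hsq : hB.sqrt = U * diagonal f * star U := rfl
  have key : ∀ X Y : Matrix n n ℝ,
      (star U * X * U) * (star U * Y * U) = star U * (X * Y) * U := by
    intro X Y
    calc (star U * X * U) * (star U * Y * U)
        = star U * (X * ((U * star U) * (Y * U))) := by simp only [mul_assoc]
    _ = star U * (X * (Y * U)) := by rw [hU1, one_mul]
    _ = star U * (X * Y) * U := by simp only [mul_assoc]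
  have key' : ∀ X Y : Matrix n n ℝ,
      (U * X * star U) * (U * Y * star U) = U * (X * Y) * star U := by
    intro X Y
    calc (U * X * star U) * (U * Y * star U)
        = U * (X * ((star U * U) * (Y * star U))) := by simp only [mul_assoc]
    _ = U * (X * (Y * star U)) := by rw [hU2, one_mul]
    _ = U * (X * Y) * star U := by simp only [mul_assoc]
  have hB' : star U * B * U = diagonal g := by
    conv_lhs => rw [hB.1.spectral_theorem]
    calc star U * (U * diagonal g * star U) * U
        = (star U * U) * diagonal g * (star U * U) := by simp only [mul_assoc]
    _ = diagonal g := by rw [hU2, one_mul, mul_one]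
  set A' : Matrix n n ℝ := star U * A * U with hA'def
  have hA2 : A = U * A' * star U := by
    rw [hA'def]
    calc A = (U * star U) * A * (U * star U) := by rw [hU1, one_mul, mul_one]
    _ = U * (star U * A * U) * star U := by simp only [mul_assoc]
  have hAg : A' * diagonal g = diagonal g * A' := by
    calc A' * diagonal g = (star U * A * U) * (star U * B * U) := by rw [hB']
    _ = star U * (A * B) * U := key A B
    _ = star U * (B * A) * U := by rw [h]
    _ = (star U * B * U) * (star U * A * U) := (key B A).symm
    _ = diagonal g * A' := by rw [hB']
  have hAf : A' * diagonal f = diagonal f * A' := by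
    ext i j
    have hgij := congrFun (congrFun hAg i) j
    rw [Matrix.mul_diagonal, Matrix.diagonal_mul] at hgij
    rw [Matrix.mul_diagonal, Matrix.diagonal_mul]
    by_cases hgg : g i = g j
    · have : hB.1.eigenvalues i = hB.1.eigenvalues j := by
        have := hgg
        simp only [hgdef, Function.comp_apply] at this
        exact_mod_cast this
      have hff : f i = f j := by simp [hfdef, this]
      rw [hff, mul_comm]
    · have h0 : A' i j = 0 := by
        by_contra hne
        apply hgg
        have : A' i j * g j = A' i j * g i := by rw [hgij, mul_comm]
        exact (mul_left_cancel₀ hne this).symm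
      simp [h0]
  calc A * hB.sqrt = (U * A' * star U) * (U * diagonal f * star U) := by rw [← hA2, hsq]
  _ = U * (A' * diagonal f) * star U := key' A' (diagonal f)
  _ = U * (diagonal f * A') * star U := by rw [hAf]
  _ = (U * diagonal f * star U) * (U * A' * star U) := (key' (diagonal f) A').symm
  _ = hB.sqrt * A := by rw [← hA2, hsq]

lemma psd_sqrt_mul_self {n : Type*} [Fintype n] [DecidableEq n] {B : Matrix n n ℝ}
    (hB : B.PosSemidef) : hB.sqrt * hB.sqrt = B := by
  set U : Matrix n n ℝ := hB.1.eigenvectorUnitary.1 with hUdef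
  have hU2 : star U * U = 1 := Matrix.mem_unitaryGroup_iff'.mp hB.1.eigenvectorUnitary.2
  set f : n → ℝ := ((↑) : ℝ → ℝ) ∘ Real.sqrt ∘ hB.1.eigenvalues with hfdef
  have hsq : hB.sqrt = U * diagonal f * star U := rfl
  rw [hsq]
  calc U * diagonal f * star U * (U * diagonal f * star U)
      = U * diagonal f * (star U * U) * diagonal f * star U := by simp only [mul_assoc]
  _ = U * diagonal (RCLike.ofReal ∘ hB.1.eigenvalues) * star U := by
    rw [hU2, mul_one, mul_assoc U, diagonal_mul_diagonal]
    congr 3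
    funext i
    simp [hfdef, Real.mul_self_sqrt (hB.eigenvalues_nonneg i)]
  _ = B := hB.1.spectral_theorem.symm

lemma inv_comm {S A : Matrix n n ℝ} (hS : IsUnit S.det) (h : S * A = A * S) :
    S⁻¹ * A = A * S⁻¹ := by
  calc S⁻¹ * A = S⁻¹ * A * (S * S⁻¹) := by rw [Matrix.mul_nonsing_inv S hS, mul_one]
  _ = S⁻¹ * (A * S) * S⁻¹ := by simp only [mul_assoc]
  _ = S⁻¹ * (S * A) * S⁻¹ := by rw [h]
  _ = (S⁻¹ * S) * A * S⁻¹ := by simp only [mul_assoc]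
  _ = A * S⁻¹ := by rw [Matrix.nonsing_inv_mul S hS, one_mul]

lemma prod_lemma {M : Type*} [Monoid M] {p q s k : M}
    (hpq : q * p = p * q) (hsk : k * s = s * k) (hpk : p * k = k * p)
    (hqqs : q * q * s = 1) :
    (q * p * q) * (k * s * k) = k * p * k := by
  calc (q * p * q) * (k * s * k) = q * p * q * k * s * k := by
        rw [← mul_assoc, ← mul_assoc]
  _ = p * q * q * k * s * k := by rw [hpq]
  _ = p * q * q * (k * s) * k := by rw [mul_assoc (p * q * q) k s]
  _ = p * q * q * (s * k) * k := by rw [hsk]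
  _ = p * q * q * s * (k * k) := by
        rw [← mul_assoc (p * q * q) s k, mul_assoc (p * q * q * s) k k]
  _ = p * (q * q * s) * (k * k) := by rw [mul_assoc p q q, mul_assoc p (q * q) s]
  _ = p * (k * k) := by rw [hqqs, mul_one]
  _ = p * k * k := (mul_assoc p k k).symm
  _ = k * p * k := by rw [hpk]

end aux

theorem stmt19 {d : ℕ} {SP SQ SK : Matrix (Fin d) (Fin d) ℝ}
    (hP : SP.PosDef) (hQ : SQ.PosDef) (hK : SK.PosDef) (ε : ℝ) (hε : 0 < ε)
    (hPQ : SP * SQ = SQ * SP) (hPK : SP * SK = SK * SP) (hQK : SQ * SK = SK * SQ)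
    (h1 : frob ((hQ.posSemidef.sqrt)⁻¹ * SP * (hQ.posSemidef.sqrt)⁻¹ - 1) ≤ ε)
    (h2 : frob ((hP.posSemidef.sqrt)⁻¹ * SQ * (hP.posSemidef.sqrt)⁻¹ - 1) ≤ ε)
    (h3 : frob ((hK.posSemidef.sqrt)⁻¹ * SQ * (hK.posSemidef.sqrt)⁻¹ - 1) ≤ ε)
    (h4 : frob ((hQ.posSemidef.sqrt)⁻¹ * SK * (hQ.posSemidef.sqrt)⁻¹ - 1) ≤ ε) :
    D1 hP hK ≤ D1 hP hQ + D1 hQ hK + 2 * ε ^ 2 := by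
  set sP := hP.posSemidef.sqrt with hsPdef
  set sQ := hQ.posSemidef.sqrt with hsQdef
  set sK := hK.posSemidef.sqrt with hsKdef
  -- determinants of the square roots are units
  have hdet : ∀ {S : Matrix (Fin d) (Fin d) ℝ} (hS : S.PosDef),
      IsUnit (hS.posSemidef.sqrt).det := by
    intro S hS
    have h2 : (hS.posSemidef.sqrt).det * (hS.posSemidef.sqrt).det = S.det := by
      rw [← Matrix.det_mul, psd_sqrt_mul_self hS.posSemidef]
    have : (hS.posSemidef.sqrt).det ≠ 0 := by
      intro h0
      rw [h0, mul_zero] at h2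
      exact hS.det_pos.ne' h2.symm
    exact this.isUnit
  have hdP := hdet hP
  have hdQ := hdet hQ
  have hdK := hdet hK
  -- q * q * SQ = 1
  have hqqs : sQ⁻¹ * sQ⁻¹ * SQ = 1 := by
    rw [← Matrix.mul_inv_rev, psd_sqrt_mul_self hQ.posSemidef,
      Matrix.nonsing_inv_mul SQ hQ.det_pos.ne'.isUnit]
  -- commuting facts
  have hc1 : sQ⁻¹ * SP = SP * sQ⁻¹ :=
    inv_comm hdQ (commute_sqrt hQ.posSemidef hPQ).symm
  have hc2 : sK⁻¹ * SQ = SQ * sK⁻¹ :=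
    inv_comm hdK (commute_sqrt hK.posSemidef hQK).symm
  have hc3 : sK⁻¹ * SP = SP * sK⁻¹ :=
    inv_comm hdK (commute_sqrt hK.posSemidef hPK).symm
  have hc4 : sQ⁻¹ * SK = SK * sQ⁻¹ :=
    inv_comm hdQ (commute_sqrt hQ.posSemidef hQK.symm).symm
  have hc5 : sP⁻¹ * SQ = SQ * sP⁻¹ :=
    inv_comm hdP (commute_sqrt hP.posSemidef hPQ.symm).symm
  have hc6 : sP⁻¹ * SK = SK * sP⁻¹ :=
    inv_comm hdP (commute_sqrt hP.posSemidef hPK.symm).symm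
  -- the two product identities
  have hprod1 : (sQ⁻¹ * SP * sQ⁻¹) * (sK⁻¹ * SQ * sK⁻¹) = sK⁻¹ * SP * sK⁻¹ :=
    prod_lemma hc1 hc2 hc3.symm hqqs
  have hprod2 : (sQ⁻¹ * SK * sQ⁻¹) * (sP⁻¹ * SQ * sP⁻¹) = sP⁻¹ * SK * sP⁻¹ :=
    prod_lemma hc4 hc5 hc6.symm hqqs
  -- expansion identities
  have e1 : sK⁻¹ * SP * sK⁻¹ - 1 =
      (sQ⁻¹ * SP * sQ⁻¹ - 1) + (sK⁻¹ * SQ * sK⁻¹ - 1)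
        + (sQ⁻¹ * SP * sQ⁻¹ - 1) * (sK⁻¹ * SQ * sK⁻¹ - 1) := by
    rw [← hprod1]; noncomm_ring
  have e2 : sP⁻¹ * SK * sP⁻¹ - 1 =
      (sQ⁻¹ * SK * sQ⁻¹ - 1) + (sP⁻¹ * SQ * sP⁻¹ - 1)
        + (sQ⁻¹ * SK * sQ⁻¹ - 1) * (sP⁻¹ * SQ * sP⁻¹ - 1) := by
    rw [← hprod2]; noncomm_ring
  -- norm bounds
  rw [frob_eq_norm] at h1 h2 h3 h4
  have bound : ∀ a b : Matrix (Fin d) (Fin d) ℝ, ‖a‖ ≤ ε → ‖b‖ ≤ ε →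
      ‖a + b + a * b‖ ≤ ‖a‖ + ‖b‖ + ε ^ 2 := by
    intro a b ha hb
    calc ‖a + b + a * b‖ ≤ ‖a + b‖ + ‖a * b‖ := norm_add_le _ _
    _ ≤ (‖a‖ + ‖b‖) + ‖a‖ * ‖b‖ :=
        add_le_add (norm_add_le _ _) (Matrix.frobenius_norm_mul a b)
    _ ≤ (‖a‖ + ‖b‖) + ε * ε :=
        add_le_add_right (mul_le_mul ha hb (norm_nonneg _) hε.le) _
    _ = ‖a‖ + ‖b‖ + ε ^ 2 := by ring
  have key1 : frob (sK⁻¹ * SP * sK⁻¹ - 1) ≤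
      ‖sQ⁻¹ * SP * sQ⁻¹ - 1‖ + ‖sK⁻¹ * SQ * sK⁻¹ - 1‖ + ε ^ 2 := by
    rw [frob_eq_norm, e1]
    exact bound _ _ h1 h3
  have key2 : frob (sP⁻¹ * SK * sP⁻¹ - 1) ≤
      ‖sQ⁻¹ * SK * sQ⁻¹ - 1‖ + ‖sP⁻¹ * SQ * sP⁻¹ - 1‖ + ε ^ 2 := by
    rw [frob_eq_norm, e2]
    exact bound _ _ h4 h2
  unfold D1
  rw [frob_eq_norm (sQ⁻¹ * SP * sQ⁻¹ - 1), frob_eq_norm (sP⁻¹ * SQ * sP⁻¹ - 1),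
    frob_eq_norm (sK⁻¹ * SQ * sK⁻¹ - 1), frob_eq_norm (sQ⁻¹ * SK * sQ⁻¹ - 1)]
  linarith
end
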